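/- The sequence of large Schröder numbers (S_n)_{n≥0} is log-convex: for all n ≥ 1, S_n^2 ≤ S_{n-1} · S_{n+1}. -/

import Mathlib

/-- The large Schröder numbers: `S (n+1) = S n + ∑_{k=0}^{n} S k * S (n-k)`. -/
def schroder : ℕ → ℕ
  | 0 => 1
  | n + 1 => schroder n + ∑ i : Fin (n + 1), schroder i * schroder (n - i)

open PowerSeries

/-- The generating function of the Schröder numbers, over `ℤ`. -/
noncomputable def schroderPS : ℤ⟦X⟧ := PowerSeries.mk fun n => (schroder n : ℤ)

lemma schroder_succ_eq (n : ℕ) :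
    schroder (n + 1) = schroder n + ∑ i : Fin (n + 1), schroder i * schroder (n - i) := by
  rw [schroder]

lemma schroder_zero : schroder 0 = 1 := by rw [schroder]

lemma schroder_one : schroder 1 = 2 := by
  rw [schroder_succ_eq]; simp [Fin.sum_univ_succ, schroder_zero]

lemma schroder_two : schroder 2 = 6 := by
  rw [schroder_succ_eq]; simp [Fin.sum_univ_succ, schroder_zero, schroder_one]

lemma schroderPS_rel : schroderPS = 1 + X * schroderPS + X * (schroderPS * schroderPS) := by
  ext n
  rcases n with _ | n
  · simp [schroderPS, schroder]
  · rw [map_add, map_add, coeff_succ_X_mul, coeff_succ_X_mul, coeff_mul,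
      Finset.Nat.sum_antidiagonal_eq_sum_range_succ_mk]
    simp only [schroderPS, coeff_mk, coeff_one, Nat.succ_ne_zero, if_false, zero_add]
    rw [schroder_succ_eq]
    push_cast
    rw [Fin.sum_univ_eq_sum_range (fun i => (schroder i : ℤ) * (schroder (n - i) : ℤ)) (n + 1)]

lemma schroderPS_deriv_rel :
    d⁄dX ℤ schroderPS = schroderPS + X * d⁄dX ℤ schroderPS +
      schroderPS * schroderPS + 2 * (X * (schroderPS * d⁄dX ℤ schroderPS)) := by
  conv_lhs => rw [schroderPS_rel]
  simp only [map_add, Derivation.leibniz, derivative_X, smul_eq_mul, mul_one,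
    Derivation.map_one_eq_zero]
  ring

lemma schroderPS_ode :
    X * (X ^ 2 - 6 * X + 1) * d⁄dX ℤ schroderPS = (3 * X - 1) * schroderPS + X + 1 := by
  linear_combination
    (2 * X * schroderPS + X + 1 + 4 * X ^ 2 * d⁄dX ℤ schroderPS) * schroderPS_rel
    - (X * (2 * X * schroderPS + X - 1)) * schroderPS_deriv_rel

/-- The holonomic recurrence `(m+3) S (m+2) + m S m = (6m+9) S (m+1)`. -/
lemma schroder_linrec (m : ℕ) :
    ((m : ℤ) + 3) * schroder (m + 2) + m * schroder m = (6 * m + 9) * schroder (m + 1) := by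
  rcases m with _ | m
  · norm_num [schroder_two, schroder_one]
  · have E : X ^ 3 * d⁄dX ℤ schroderPS + X ^ 1 * d⁄dX ℤ schroderPS + schroderPS
        = C 6 * (X ^ 2 * d⁄dX ℤ schroderPS) + C 3 * (X ^ 1 * schroderPS) + (X + 1) := by
      have h6 : (C 6 : ℤ⟦X⟧) = 6 := by simp
      have h3 : (C 3 : ℤ⟦X⟧) = 3 := by simp
      rw [h6, h3]
      linear_combination schroderPS_ode
    have h := congrArg (PowerSeries.coeff (R := ℤ) (m + 3)) E
    simp only [map_add, coeff_C_mul] at h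
    rw [coeff_X_pow_mul' _ 3 (m + 3), coeff_X_pow_mul' _ 2 (m + 3),
      coeff_X_pow_mul' _ 1 (m + 3), coeff_X_pow_mul' _ 1 (m + 3)] at h
    rw [if_pos (show 3 ≤ m + 3 by omega), if_pos (show 2 ≤ m + 3 by omega),
      if_pos (show 1 ≤ m + 3 by omega), if_pos (show 1 ≤ m + 3 by omega)] at h
    simp only [show m + 3 - 3 = m by omega, show m + 3 - 1 = m + 2 by omega,
      show m + 3 - 2 = m + 1 by omega, coeff_derivative, coeff_X, coeff_one,
      if_neg (show ¬ m + 3 = 1 by omega), if_neg (show ¬ m + 3 = 0 by omega)] at h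
    simp only [schroderPS, coeff_mk] at h
    simp only [show m + 1 + 2 = m + 3 by omega, show m + 1 + 1 = m + 2 by omega,
      show m + 2 + 1 = m + 3 by omega] at h ⊢
    push_cast at h ⊢
    linear_combination h

lemma schroder_mono (n : ℕ) : schroder n ≤ schroder (n + 1) := by
  rw [schroder_succ_eq]; exact Nat.le_add_right _ _

lemma schroder_star (m : ℕ) :
    ((m : ℤ) + 3) * (schroder (m + 1) : ℤ) ^ 2 + m * (schroder m : ℤ) ^ 2
      ≤ (6 * m + 9) * (schroder m : ℤ) * (schroder (m + 1) : ℤ) := by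
  induction m with
  | zero => norm_num [schroder_one, schroder_zero]
  | succ m ih =>
    simp only [show m + 1 + 1 = m + 2 by omega] at *
    set a : ℤ := (schroder m : ℤ) with ha_def
    set b : ℤ := (schroder (m + 1) : ℤ) with hb_def
    set c : ℤ := (schroder (m + 2) : ℤ) with hc_def
    have hH : ((m : ℤ) + 3) * c + m * a = (6 * m + 9) * b := schroder_linrec m
    have hab : a ≤ b := by
      rw [ha_def, hb_def]; exact_mod_cast schroder_mono m
    have ha : (0 : ℤ) ≤ a := Int.natCast_nonneg _
    have hb : (0 : ℤ) ≤ b := Int.natCast_nonneg _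
    have hm : (0 : ℤ) ≤ (m : ℤ) := Int.natCast_nonneg _
    have key : ((m : ℤ) + 3) ^ 2 * ((6 * m + 15) * b * c - (m + 1) * b ^ 2 - (m + 4) * c ^ 2)
        = ((m : ℤ) + 4) * m * ((6 * m + 9) * a * b - m * a ^ 2 - (m + 3) * b ^ 2)
          + b * ((51 * m + 72) * b - 9 * m * a) := by
      linear_combination ((m : ℤ) * (m + 4) * a + 9 * b - (m + 3) * (m + 4) * c) * hH
    have h1 : (0 : ℤ) ≤ (6 * m + 9) * a * b - m * a ^ 2 - (m + 3) * b ^ 2 := by linarith [ih]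
    have h2 : (0 : ℤ) ≤ b * ((51 * m + 72) * b - 9 * m * a) := by
      have h9 : 9 * (m : ℤ) * a ≤ 9 * m * b := by nlinarith
      nlinarith
    have h3 : (0 : ℤ) ≤ ((m : ℤ) + 3) ^ 2
        * ((6 * m + 15) * b * c - (m + 1) * b ^ 2 - (m + 4) * c ^ 2) := by
      rw [key]
      have : (0 : ℤ) ≤ ((m : ℤ) + 4) * m := by positivity
      nlinarith
    have hp : (0 : ℤ) < ((m : ℤ) + 3) ^ 2 := by positivity
    have h4 : (0 : ℤ) ≤ (6 * m + 15) * b * c - (m + 1) * b ^ 2 - (m + 4) * c ^ 2 := by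
      nlinarith [h3, hp]
    push_cast
    linarith [h4]

theorem schroder_log_convex (n : ℕ) (hn : 1 ≤ n) :
    schroder n ^ 2 ≤ schroder (n - 1) * schroder (n + 1) := by
  obtain ⟨m, rfl⟩ : ∃ m, n = m + 1 := ⟨n - 1, by omega⟩
  simp only [Nat.add_sub_cancel, show m + 1 + 1 = m + 2 by omega]
  have hH := schroder_linrec m
  have hst := schroder_star m
  have ha : (0 : ℤ) ≤ (schroder m : ℤ) := Int.natCast_nonneg _
  have hmul : ((m : ℤ) + 3) * ((schroder m : ℤ) * (schroder (m + 2) : ℤ))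
      + m * (schroder m : ℤ) ^ 2
      = (6 * m + 9) * (schroder m : ℤ) * (schroder (m + 1) : ℤ) := by
    linear_combination (schroder m : ℤ) * hH
  have hle : ((m : ℤ) + 3) * (schroder (m + 1) : ℤ) ^ 2
      ≤ ((m : ℤ) + 3) * ((schroder m : ℤ) * (schroder (m + 2) : ℤ)) := by linarith
  have hfin : (schroder (m + 1) : ℤ) ^ 2 ≤ (schroder m : ℤ) * (schroder (m + 2) : ℤ) :=
    le_of_mul_le_mul_left hle (by positivity)
  exact_mod_cast hfin
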